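/- If P is a bounded poset of finite height such that every open interval (x,y) of P of height at least 1 is connected (as an order: any two elements are joined by a zigzag sequence x0 ≤ x1 ≥ x2 ≤ ... ≤ xn), then P is strongly connected. -/

import Mathlib

/-- An antichain cutset: a set intersecting each maximal chain in exactly one element. -/
def IsAntichainCutset {α : Type*} [PartialOrder α] (A : Set α) : Prop :=
  ∀ c : Set α, IsMaxChain (· ≤ ·) c → ∃! x, x ∈ c ∧ x ∈ A

/-- A poset is strongly connected if any two maximal chains are connected by a finite
sequence of maximal chains in which consecutive chains have symmetric difference of
cardinality two. -/
def StronglyConnectedOrder (α : Type*) [PartialOrder α] : Prop :=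
  ∀ c d : Set α, IsMaxChain (· ≤ ·) c → IsMaxChain (· ≤ ·) d →
    ∃ (n : ℕ) (f : ℕ → Set α), f 0 = c ∧ f n = d ∧
      (∀ i ≤ n, IsMaxChain (· ≤ ·) (f i)) ∧
      ∀ i < n, (symmDiff (f i) (f (i + 1))).ncard = 2

namespace SCAux

variable {α : Type*} [PartialOrder α]

lemma chain_comp {c : Set α} (hc : IsChain (· ≤ ·) c) {w z : α} (hw : w ∈ c) (hz : z ∈ c) :
    w ≤ z ∨ z ≤ w := by
  rcases eq_or_ne w z with rfl | h
  · exact Or.inl le_rfl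
  · exact hc hw hz h

lemma mem_of_comp {c : Set α} (hc : IsMaxChain (· ≤ ·) c) {z : α}
    (h : ∀ w ∈ c, z ≤ w ∨ w ≤ z) : z ∈ c := by
  have hch : IsChain (· ≤ ·) (insert z c) := hc.1.insert (fun b hb _ => h b hb)
  have he := hc.2 hch (Set.subset_insert _ _)
  rw [he]; exact Set.mem_insert _ _

lemma chain_least {s : Set α} (hs : IsChain (· ≤ ·) s) (hfin : s.Finite) (hne : s.Nonempty) :
    ∃ m ∈ s, ∀ z ∈ s, m ≤ z := by
  obtain ⟨m, hm, hmin⟩ := hfin.exists_minimal hne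
  refine ⟨m, hm, fun z hz => ?_⟩
  rcases eq_or_ne m z with rfl | hne'
  · exact le_rfl
  · rcases hs hm hz hne' with h | h
    · exact h
    · exact hmin hz h

lemma mem_tricho {c : Set α} (hc : IsChain (· ≤ ·) c) {x y : α} (hx : x ∈ c) (hy : y ∈ c)
    {w : α} (hw : w ∈ c) : w ≤ x ∨ y ≤ w ∨ w ∈ Set.Ioo x y := by
  rcases chain_comp hc hw hx with h | h
  · exact Or.inl h
  · rcases chain_comp hc hw hy with h2 | h2
    · rcases eq_or_ne w x with rfl | hwx
      · exact Or.inl le_rfl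
      · rcases eq_or_ne w y with rfl | hwy
        · exact Or.inr (Or.inl le_rfl)
        · exact Or.inr (Or.inr ⟨lt_of_le_of_ne h (Ne.symm hwx), lt_of_le_of_ne h2 hwy⟩)
    · exact Or.inr (Or.inl h2)

lemma ioo_empty {c : Set α} (hc : IsMaxChain (· ≤ ·) c) {u v : α}
    (hu : u ∈ c) (hv : v ∈ c) (hcc : c ∩ Set.Ioo u v = ∅) : Set.Ioo u v = ∅ := by
  by_contra h
  obtain ⟨z, hz⟩ := Set.nonempty_iff_ne_empty.2 h
  have hzc : z ∈ c := by
    refine mem_of_comp hc (fun w hw => ?_)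
    rcases mem_tricho hc.1 hu hv hw with h1 | h1 | h1
    · exact Or.inr (h1.trans hz.1.le)
    · exact Or.inl (hz.2.le.trans h1)
    · exact (Set.eq_empty_iff_forall_notMem.mp hcc w ⟨hw, h1⟩).elim
  have : z ∈ c ∩ Set.Ioo u v := ⟨hzc, hz⟩
  rw [hcc] at this
  exact this

/-- The elementary move relation on maximal chains. -/
def Move (c d : Set α) : Prop := IsMaxChain (· ≤ ·) d ∧ (symmDiff c d).ncard = 2

lemma extend_between {c : Set α} (hc : IsMaxChain (· ≤ ·) c) {u v t : α}
    (hu : u ∈ c) (hv : v ∈ c) (ht : t ∈ Set.Ioo u v) :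
    ∃ c', IsMaxChain (· ≤ ·) c' ∧ t ∈ c' ∧ u ∈ c' ∧ v ∈ c' ∧
      c' \ Set.Ioo u v = c \ Set.Ioo u v := by
  set s : Set α := insert t ((c ∩ Set.Iic u) ∪ (c ∩ Set.Ici v)) with hs
  have hsch : IsChain (· ≤ ·) s := by
    refine IsChain.insert (hc.1.mono ?_) ?_
    · intro z hz
      rcases hz with hz | hz
      · exact hz.1
      · exact hz.1
    · intro w hw _
      rcases hw with hw | hw
      · exact Or.inr (hw.2.trans ht.1.le)
      · exact Or.inl (ht.2.le.trans hw.2)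
  obtain ⟨c', hc', hsub⟩ := hsch.exists_maxChain
  have htc' : t ∈ c' := hsub (Set.mem_insert _ _)
  have huc' : u ∈ c' := hsub (Set.mem_insert_of_mem _ (Or.inl ⟨hu, le_rfl⟩))
  have hvc' : v ∈ c' := hsub (Set.mem_insert_of_mem _ (Or.inr ⟨hv, le_rfl⟩))
  have hIic : ∀ z ∈ c', z ≤ u → z ∈ c := by
    intro z hzc' hzu
    refine mem_of_comp hc (fun w hw => ?_)
    rcases chain_comp hc.1 hw hu with h1 | h1
    · have hwc' : w ∈ c' := hsub (Set.mem_insert_of_mem _ (Or.inl ⟨hw, h1⟩))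
      exact chain_comp hc'.1 hzc' hwc'
    · exact Or.inl (hzu.trans h1)
  have hIci : ∀ z ∈ c', v ≤ z → z ∈ c := by
    intro z hzc' hvz
    refine mem_of_comp hc (fun w hw => ?_)
    rcases chain_comp hc.1 hw hv with h1 | h1
    · exact Or.inr (h1.trans hvz)
    · have hwc' : w ∈ c' := hsub (Set.mem_insert_of_mem _ (Or.inr ⟨hw, h1⟩))
      exact chain_comp hc'.1 hzc' hwc'
  refine ⟨c', hc', htc', huc', hvc', ?_⟩
  ext z
  constructor
  · rintro ⟨hz, hznoo⟩
    rcases mem_tricho hc'.1 huc' hvc' hz with h1 | h1 | h1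
    · exact ⟨hIic z hz h1, hznoo⟩
    · exact ⟨hIci z hz h1, hznoo⟩
    · exact absurd h1 hznoo
  · rintro ⟨hz, hznoo⟩
    rcases mem_tricho hc.1 hu hv hz with h1 | h1 | h1
    · exact ⟨hsub (Set.mem_insert_of_mem _ (Or.inl ⟨hz, h1⟩)), hznoo⟩
    · exact ⟨hsub (Set.mem_insert_of_mem _ (Or.inr ⟨hz, h1⟩)), hznoo⟩
    · exact absurd h1 hznoo

lemma main {α : Type*} [PartialOrder α]
    (hfin : ∀ e : Set α, IsChain (· ≤ ·) e → e.Finite)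
    (hconn : ∀ x y : α, (∃ u ∈ Set.Ioo x y, ∃ v ∈ Set.Ioo x y, u < v) →
      ∀ a ∈ Set.Ioo x y, ∀ b ∈ Set.Ioo x y,
        Relation.ReflTransGen
          (fun u v => u ∈ Set.Ioo x y ∧ v ∈ Set.Ioo x y ∧ (u ≤ v ∨ v ≤ u)) a b) :
    ∀ (n : ℕ) (p q : α),
      (∀ e : Set α, IsChain (· ≤ ·) e → e ⊆ Set.Icc p q → e.ncard ≤ n) →
      ∀ c d : Set α, IsMaxChain (· ≤ ·) c → IsMaxChain (· ≤ ·) d →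
        p ∈ c → q ∈ c → p ∈ d → q ∈ d → c \ Set.Ioo p q = d \ Set.Ioo p q →
        Relation.ReflTransGen Move c d := by
  intro n
  induction n with
  | zero =>
    intro p q hbound c d hc hd hpc hqc hpd hqd hdiff
    by_cases hpq : p < q
    case neg =>
      have hioo : Set.Ioo p q = ∅ := Set.Ioo_eq_empty hpq
      rw [hioo, Set.diff_empty, Set.diff_empty] at hdiff
      rw [hdiff]
    · exfalso
      have h1 : ({p} : Set α).ncard ≤ 0 := hbound {p}
        (Set.Subsingleton.isChain Set.subsingleton_singleton)
        (by simp [Set.singleton_subset_iff, hpq.le])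
      simp [Set.ncard_singleton] at h1
  | succ n IH =>
    intro p q hbound c d hc hd hpc hqc hpd hqd hdiff
    by_cases hpq : p < q
    case neg =>
      have hioo : Set.Ioo p q = ∅ := Set.Ioo_eq_empty hpq
      rw [hioo, Set.diff_empty, Set.diff_empty] at hdiff
      rw [hdiff]
    have hdfin : d.Finite := hfin d hd.1
    have finish_eq : ∀ c' : Set α, IsMaxChain (· ≤ ·) c' →
        c' ∩ Set.Iic q = d ∩ Set.Iic q → c' \ Set.Ioo p q = d \ Set.Ioo p q →
        Relation.ReflTransGen Move c' d := by
      intro c' hc' hag hdf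
      have hqc' : q ∈ c' := by
        have h0 : q ∈ d ∩ Set.Iic q := ⟨hqd, le_rfl⟩
        rw [← hag] at h0; exact h0.1
      have hsub : c' ⊆ d := by
        intro z hz
        rcases chain_comp hc'.1 hz hqc' with h | h
        · have h0 : z ∈ c' ∩ Set.Iic q := ⟨hz, h⟩
          rw [hag] at h0; exact h0.1
        · have h0 : z ∈ c' \ Set.Ioo p q := ⟨hz, fun hzo => absurd hzo.2 (h.not_gt)⟩
          rw [hdf] at h0; exact h0.1
      rw [hc'.2 hd.1 hsub]
    have inner : ∀ m : ℕ, ∀ (c' : Set α) (x : α), IsMaxChain (· ≤ ·) c' →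
        p ∈ c' → q ∈ c' → x ∈ c' → x ∈ d → p ≤ x → x ≤ q →
        c' ∩ Set.Iic x = d ∩ Set.Iic x → c' \ Set.Ioo p q = d \ Set.Ioo p q →
        (d ∩ Set.Ioc x q).ncard ≤ m → Relation.ReflTransGen Move c' d := by
      intro m
      induction m with
      | zero =>
        intro c' x hc' hpc' hqc' hxc' hxd hpx hxq hag hdf hm
        rcases eq_or_lt_of_le hxq with rfl | hxq'
        · exact finish_eq c' hc' hag hdf
        · exfalso
          have hne : (d ∩ Set.Ioc x q).Nonempty := ⟨q, hqd, hxq', le_rfl⟩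
          have hfi : (d ∩ Set.Ioc x q).Finite := hdfin.subset Set.inter_subset_left
          have := (Set.ncard_pos hfi).mpr hne
          omega
      | succ m ihm =>
        intro c' x hc' hpc' hqc' hxc' hxd hpx hxq hag hdf hm
        rcases eq_or_lt_of_le hxq with rfl | hxq'
        · exact finish_eq c' hc' hag hdf
        -- least element b of d strictly above x
        obtain ⟨b, hbmem, hbmin⟩ := chain_least
          (hd.1.mono (Set.inter_subset_left : d ∩ Set.Ioc x q ⊆ d))
          (hdfin.subset Set.inter_subset_left) ⟨q, hqd, hxq', le_rfl⟩
        obtain ⟨y, hymem, hymin⟩ := chain_least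
          (hd.1.mono (fun z (hz : z ∈ (c' ∩ d) ∩ Set.Ioc x q) => hz.1.2))
          (hdfin.subset (fun z hz => hz.1.2)) ⟨q, ⟨hqc', hqd⟩, hxq', le_rfl⟩
        have hbd : b ∈ d := hbmem.1
        have hxb : x < b := hbmem.2.1
        have hbq : b ≤ q := hbmem.2.2
        have hyc : y ∈ c' := hymem.1.1
        have hyd : y ∈ d := hymem.1.2
        have hxy : x < y := hymem.2.1
        have hyq : y ≤ q := hymem.2.2
        have hby : b ≤ y := hbmin y ⟨hyd, hymem.2⟩
        have hdIoo : d ∩ Set.Ioo x b = ∅ := by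
          ext z
          simp only [Set.mem_inter_iff, Set.mem_Ioo, Set.mem_empty_iff_false, iff_false,
            not_and]
          rintro hzd hzx
          intro hzb
          exact absurd (hbmin z ⟨hzd, hzx, hzb.le.trans hbq⟩) (hzb.not_ge)
        have hIooxb : Set.Ioo x b = ∅ := ioo_empty hd hxd hbd hdIoo
        -- finishing recursion, given a chain through b that agrees with c' outside (x,y)
        have finish_b : ∀ cx : Set α, IsMaxChain (· ≤ ·) cx → b ∈ cx →
            cx \ Set.Ioo x y = c' \ Set.Ioo x y →
            Relation.ReflTransGen Move c' cx →
            Relation.ReflTransGen Move c' d := by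
          intro cx hcx hbcx hcxd hrtg
          have hIooxy_sub : Set.Ioo x y ⊆ Set.Ioo p q := fun z hz =>
            ⟨lt_of_le_of_lt hpx hz.1, lt_of_lt_of_le hz.2 hyq⟩
          have hmemx : ∀ z ∈ c', z ∉ Set.Ioo x y → z ∈ cx := by
            intro z hz hzn
            have h0 : z ∈ c' \ Set.Ioo x y := ⟨hz, hzn⟩
            rw [← hcxd] at h0; exact h0.1
          have hxcx : x ∈ cx := hmemx x hxc' (fun h => lt_irrefl x h.1)
          have hpcx : p ∈ cx := hmemx p hpc' (fun h => absurd h.1 (hpx.not_gt))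
          have hqcx : q ∈ cx := hmemx q hqc' (fun h => absurd h.2 (hyq.not_gt))
          have hdfx : cx \ Set.Ioo p q = d \ Set.Ioo p q := by
            ext z
            constructor
            · rintro ⟨hz, hzn⟩
              have h1 : z ∈ cx \ Set.Ioo x y := ⟨hz, fun h => hzn (hIooxy_sub h)⟩
              rw [hcxd] at h1
              have h2 : z ∈ c' \ Set.Ioo p q := ⟨h1.1, hzn⟩
              rw [hdf] at h2; exact h2
            · rintro ⟨hz, hzn⟩
              have h2 : z ∈ d \ Set.Ioo p q := ⟨hz, hzn⟩
              rw [← hdf] at h2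
              have h1 : z ∈ c' \ Set.Ioo x y := ⟨h2.1, fun h => hzn (hIooxy_sub h)⟩
              rw [← hcxd] at h1
              exact ⟨h1.1, hzn⟩
          have hagb : cx ∩ Set.Iic b = d ∩ Set.Iic b := by
            ext z
            constructor
            · rintro ⟨hz, hzb⟩
              rcases chain_comp hcx.1 hz hxcx with h | h
              · have h1 : z ∈ cx \ Set.Ioo x y := ⟨hz, fun hh => absurd hh.1 (h.not_gt)⟩
                rw [hcxd] at h1
                have h2 : z ∈ c' ∩ Set.Iic x := ⟨h1.1, h⟩
                rw [hag] at h2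
                exact ⟨h2.1, h.trans hxb.le⟩
              · rcases eq_or_lt_of_le h with heq | hlt
                · exact ⟨heq ▸ hxd, hzb⟩
                · rcases eq_or_lt_of_le hzb with rfl | hlt2
                  · exact ⟨hbd, le_rfl⟩
                  · exact (Set.eq_empty_iff_forall_notMem.mp hIooxb z ⟨hlt, hlt2⟩).elim
            · rintro ⟨hz, hzb⟩
              rcases chain_comp hd.1 hz hxd with h | h
              · have h2 : z ∈ d ∩ Set.Iic x := ⟨hz, h⟩
                rw [← hag] at h2
                exact ⟨hmemx z h2.1 (fun hh => absurd hh.1 (h.not_gt)), hzb⟩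
              · rcases eq_or_lt_of_le h with heq | hlt
                · exact ⟨heq ▸ hxcx, hzb⟩
                · rcases eq_or_lt_of_le hzb with rfl | hlt2
                  · exact ⟨hbcx, le_rfl⟩
                  · exact (Set.eq_empty_iff_forall_notMem.mp hIooxb z ⟨hlt, hlt2⟩).elim
          have hmeas : (d ∩ Set.Ioc b q).ncard ≤ m := by
            have hss : d ∩ Set.Ioc b q ⊂ d ∩ Set.Ioc x q := by
              constructor
              · rintro z ⟨hz, hz1, hz2⟩
                exact ⟨hz, hxb.trans hz1, hz2⟩
              · intro hcon
                have h0 := hcon ⟨hbd, hxb, hbq⟩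
                exact lt_irrefl b h0.2.1
            have := Set.ncard_lt_ncard hss (hdfin.subset Set.inter_subset_left)
            omega
          exact hrtg.trans
            (ihm cx b hcx hpcx hqcx hbcx hbd (hpx.trans hxb.le) hbq hagb hdfx hmeas)
        rcases eq_or_lt_of_le hby with rfl | hblty
        · -- b = y : y itself is already in c'
          exact finish_b c' hc' hyc rfl Relation.ReflTransGen.refl
        · have hbI : b ∈ Set.Ioo x y := ⟨hxb, hblty⟩
          have hbnc : b ∉ c' := by
            intro hbc
            exact absurd (hymin b ⟨⟨hbc, hbd⟩, hxb, hbq⟩) (hblty.not_ge)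
          have hcI : ∃ a, a ∈ c' ∧ a ∈ Set.Ioo x y := by
            by_contra hemp
            push_neg at hemp
            apply hbnc
            refine mem_of_comp hc' (fun w hw => ?_)
            rcases mem_tricho hc'.1 hxc' hyc hw with h1 | h1 | h1
            · exact Or.inr (h1.trans hxb.le)
            · exact Or.inl (hblty.le.trans h1)
            · exact absurd h1 (hemp w hw)
          obtain ⟨a, hac, haI⟩ := hcI
          by_cases hzz : ∃ u ∈ Set.Ioo x y, ∃ v ∈ Set.Ioo x y, u < v
          · -- zigzag case
            have hzig := hconn x y hzz a haI b hbI
            have key : ∀ e, Relation.ReflTransGen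
                (fun u v => u ∈ Set.Ioo x y ∧ v ∈ Set.Ioo x y ∧ (u ≤ v ∨ v ≤ u)) a e →
                ∃ ce, IsMaxChain (· ≤ ·) ce ∧ e ∈ ce ∧
                  ce \ Set.Ioo x y = c' \ Set.Ioo x y ∧
                  Relation.ReflTransGen Move c' ce := by
              intro e he
              induction he with
              | refl => exact ⟨c', hc', hac, rfl, Relation.ReflTransGen.refl⟩
              | @tail mid e2 h1 h2 ih =>
                obtain ⟨c₂, hc₂, hmidc₂, hd₂, hr₂⟩ := ih
                obtain ⟨hmidI, heI, hcomp⟩ := h2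
                have hxc₂ : x ∈ c₂ := by
                  have h0 : x ∈ c' \ Set.Ioo x y := ⟨hxc', fun h => lt_irrefl x h.1⟩
                  rw [← hd₂] at h0; exact h0.1
                have hyc₂ : y ∈ c₂ := by
                  have h0 : y ∈ c' \ Set.Ioo x y := ⟨hyc, fun h => lt_irrefl y h.2⟩
                  rw [← hd₂] at h0; exact h0.1
                rcases eq_or_ne mid e2 with rfl | hne
                · exact ⟨c₂, hc₂, hmidc₂, hd₂, hr₂⟩
                have hlt : mid < e2 ∨ e2 < mid := by
                  rcases hcomp with h | h
                  · exact Or.inl (lt_of_le_of_ne h hne)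
                  · exact Or.inr (lt_of_le_of_ne h hne.symm)
                rcases hlt with hlt | hlt
                · -- go up: modify inside (mid, y)
                  obtain ⟨c₃, hc₃, he2c₃, hmidc₃, hyc₃, hd₃⟩ :=
                    extend_between hc₂ hmidc₂ hyc₂ ⟨hlt, heI.2⟩
                  have hrtg₃ : Relation.ReflTransGen Move c₂ c₃ := by
                    apply IH mid y ?_ c₂ c₃ hc₂ hc₃ hmidc₂ hyc₂ hmidc₃ hyc₃ hd₃.symm
                    intro e he hsube
                    have hplt : ∀ w ∈ e, p < w := fun w hw =>
                      lt_of_le_of_lt hpx (lt_of_lt_of_le hmidI.1 (hsube hw).1)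
                    have hpe : p ∉ e := fun hpe => lt_irrefl p (hplt p hpe)
                    have hche : IsChain (· ≤ ·) (insert p e) :=
                      he.insert (fun w hw _ => Or.inl (hplt w hw).le)
                    have hb0 : (insert p e).ncard ≤ n + 1 := by
                      refine hbound _ hche ?_
                      intro w hw
                      rcases hw with rfl | hw
                      · exact ⟨le_rfl, hpx.trans hxq⟩
                      · exact ⟨(hplt w hw).le, (hsube hw).2.trans hyq⟩
                    rw [Set.ncard_insert_of_notMem hpe (hfin e he)] at hb0
                    omega
                  refine ⟨c₃, hc₃, he2c₃, ?_, hr₂.trans hrtg₃⟩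
                  ext z
                  constructor
                  · rintro ⟨hz3, hzn⟩
                    have hzn' : z ∉ Set.Ioo mid y := fun h => hzn ⟨hmidI.1.trans h.1, h.2⟩
                    have h1 : z ∈ c₂ \ Set.Ioo mid y := by rw [← hd₃]; exact ⟨hz3, hzn'⟩
                    have h2 : z ∈ c₂ \ Set.Ioo x y := ⟨h1.1, hzn⟩
                    rw [hd₂] at h2; exact h2
                  · rintro ⟨hzc, hzn⟩
                    have h2 : z ∈ c₂ \ Set.Ioo x y := by rw [hd₂]; exact ⟨hzc, hzn⟩
                    have hzn' : z ∉ Set.Ioo mid y := fun h => hzn ⟨hmidI.1.trans h.1, h.2⟩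
                    have h1 : z ∈ c₃ \ Set.Ioo mid y := by rw [hd₃]; exact ⟨h2.1, hzn'⟩
                    exact ⟨h1.1, hzn⟩
                · -- go down: modify inside (x, mid)
                  obtain ⟨c₃, hc₃, he2c₃, hxc₃, hmidc₃, hd₃⟩ :=
                    extend_between hc₂ hxc₂ hmidc₂ ⟨heI.1, hlt⟩
                  have hrtg₃ : Relation.ReflTransGen Move c₂ c₃ := by
                    apply IH x mid ?_ c₂ c₃ hc₂ hc₃ hxc₂ hmidc₂ hxc₃ hmidc₃ hd₃.symm
                    intro e he hsube
                    have hqgt : ∀ w ∈ e, w < q := fun w hw =>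
                      lt_of_le_of_lt (hsube hw).2 (lt_of_lt_of_le hmidI.2 hyq)
                    have hqe : q ∉ e := fun hqe => lt_irrefl q (hqgt q hqe)
                    have hche : IsChain (· ≤ ·) (insert q e) :=
                      he.insert (fun w hw _ => Or.inr (hqgt w hw).le)
                    have hb0 : (insert q e).ncard ≤ n + 1 := by
                      refine hbound _ hche ?_
                      intro w hw
                      rcases hw with rfl | hw
                      · exact ⟨hpx.trans hxq, le_rfl⟩
                      · exact ⟨hpx.trans (hsube hw).1, (hqgt w hw).le⟩
                    rw [Set.ncard_insert_of_notMem hqe (hfin e he)] at hb0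
                    omega
                  refine ⟨c₃, hc₃, he2c₃, ?_, hr₂.trans hrtg₃⟩
                  ext z
                  constructor
                  · rintro ⟨hz3, hzn⟩
                    have hzn' : z ∉ Set.Ioo x mid := fun h => hzn ⟨h.1, h.2.trans hmidI.2⟩
                    have h1 : z ∈ c₂ \ Set.Ioo x mid := by rw [← hd₃]; exact ⟨hz3, hzn'⟩
                    have h2 : z ∈ c₂ \ Set.Ioo x y := ⟨h1.1, hzn⟩
                    rw [hd₂] at h2; exact h2
                  · rintro ⟨hzc, hzn⟩
                    have h2 : z ∈ c₂ \ Set.Ioo x y := by rw [hd₂]; exact ⟨hzc, hzn⟩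
                    have hzn' : z ∉ Set.Ioo x mid := fun h => hzn ⟨h.1, h.2.trans hmidI.2⟩
                    have h1 : z ∈ c₃ \ Set.Ioo x mid := by rw [hd₃]; exact ⟨h2.1, hzn'⟩
                    exact ⟨h1.1, hzn⟩
            obtain ⟨ce, hce, hbce, hced, hrtge⟩ := key b hzig
            exact finish_b ce hce hbce hced hrtge
          · -- antichain case: single swap
            push_neg at hzz
            have hanti : ∀ u ∈ Set.Ioo x y, ∀ v ∈ Set.Ioo x y, u ≤ v → u = v := by
              intro u hu v hv huv
              rcases eq_or_lt_of_le huv with h | h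
              · exact h
              · exact absurd h (hzz u hu v hv)
            have hsing : ∀ z ∈ c', z ∈ Set.Ioo x y → z = a := by
              intro z hz hzI
              rcases chain_comp hc'.1 hz hac with h | h
              · exact hanti z hzI a haI h
              · exact (hanti a haI z hzI h).symm
            have hab : a ≠ b := fun h => hbnc (h ▸ hac)
            set cx : Set α := insert b (c' \ {a}) with hcx_def
            have hbcx : b ∈ cx := Set.mem_insert _ _
            have hxa : x ≠ a := fun h => lt_irrefl x (h ▸ haI.1)
            have hya : y ≠ a := fun h => lt_irrefl y (h ▸ haI.2)
            have hxcx : x ∈ cx :=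
              Set.mem_insert_of_mem _ ⟨hxc', fun h => hxa (Set.mem_singleton_iff.mp h)⟩
            have hycx : y ∈ cx :=
              Set.mem_insert_of_mem _ ⟨hyc, fun h => hya (Set.mem_singleton_iff.mp h)⟩
            have hcxchain : IsChain (· ≤ ·) cx := by
              refine IsChain.insert (hc'.1.mono Set.diff_subset) ?_
              rintro w ⟨hw, hwa⟩ _
              rcases mem_tricho hc'.1 hxc' hyc hw with h1 | h1 | h1
              · exact Or.inr (h1.trans hxb.le)
              · exact Or.inl (hblty.le.trans h1)
              · exact (hwa (Set.mem_singleton_iff.mpr (hsing w hw h1))).elim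
            have hcxmax : IsMaxChain (· ≤ ·) cx := by
              refine ⟨hcxchain, fun s hs hsub => ?_⟩
              refine Set.Subset.antisymm hsub (fun z hz => ?_)
              by_contra hzcx
              rcases chain_comp hs hz (hsub hxcx) with hzx | hxz
              · have hzc' : z ∈ c' := by
                  refine mem_of_comp hc' (fun w hw => ?_)
                  rcases eq_or_ne w a with rfl | hwa
                  · exact Or.inl (hzx.trans haI.1.le)
                  · exact chain_comp hs hz
                      (hsub (Set.mem_insert_of_mem _
                        ⟨hw, fun hh => hwa (Set.mem_singleton_iff.mp hh)⟩))
                exact hzcx (Set.mem_insert_of_mem _ ⟨hzc', fun hh =>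
                  (haI.1.not_ge) (Set.mem_singleton_iff.mp hh ▸ hzx)⟩)
              · rcases chain_comp hs hz (hsub hycx) with hzy | hyz
                · have hzx' : z ≠ x := fun h => hzcx (h ▸ hxcx)
                  have hzy' : z ≠ y := fun h => hzcx (h ▸ hycx)
                  have hzI : z ∈ Set.Ioo x y :=
                    ⟨lt_of_le_of_ne hxz (Ne.symm hzx'), lt_of_le_of_ne hzy hzy'⟩
                  have hzb : z = b := by
                    rcases chain_comp hs hz (hsub hbcx) with h | h
                    · exact hanti z hzI b hbI h
                    · exact (hanti b hbI z hzI h).symm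
                  exact hzcx (hzb ▸ hbcx)
                · have hzc' : z ∈ c' := by
                    refine mem_of_comp hc' (fun w hw => ?_)
                    rcases eq_or_ne w a with rfl | hwa
                    · exact Or.inr (haI.2.le.trans hyz)
                    · exact chain_comp hs hz
                        (hsub (Set.mem_insert_of_mem _
                          ⟨hw, fun hh => hwa (Set.mem_singleton_iff.mp hh)⟩))
                  exact hzcx (Set.mem_insert_of_mem _ ⟨hzc', fun hh =>
                    (haI.2.not_ge) (Set.mem_singleton_iff.mp hh ▸ hyz)⟩)
            have hdiffcx : symmDiff c' cx = {a, b} := by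
              rw [Set.symmDiff_def]
              ext z
              simp only [Set.mem_union, Set.mem_diff, hcx_def, Set.mem_insert_iff,
                Set.mem_singleton_iff]
              have h1 : a ∈ c' := hac
              have h2 : b ∉ c' := hbnc
              constructor
              · tauto
              · rintro (rfl | rfl) <;> tauto
            have hmove : Move c' cx :=
              ⟨hcxmax, by rw [hdiffcx]; exact Set.ncard_pair hab⟩
            have hcxd' : cx \ Set.Ioo x y = c' \ Set.Ioo x y := by
              ext z
              constructor
              · rintro ⟨hz, hzn⟩
                rcases hz with rfl | ⟨hz1, _⟩
                · exact absurd hbI hzn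
                · exact ⟨hz1, hzn⟩
              · rintro ⟨hz, hzn⟩
                refine ⟨Set.mem_insert_of_mem _ ⟨hz, fun hh => ?_⟩, hzn⟩
                exact hzn (Set.mem_singleton_iff.mp hh ▸ haI)
            exact finish_b cx hcxmax hbcx hcxd' (Relation.ReflTransGen.single hmove)
    exact inner (d ∩ Set.Ioc p q).ncard c p hc hpc hqc hpc hpd le_rfl hpq.le
      (by
        ext z
        constructor
        · rintro ⟨hz, hzp⟩
          have h0 : z ∈ c \ Set.Ioo p q := ⟨hz, fun ho => absurd ho.1 (hzp.not_gt)⟩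
          rw [hdiff] at h0; exact ⟨h0.1, hzp⟩
        · rintro ⟨hz, hzp⟩
          have h0 : z ∈ d \ Set.Ioo p q := ⟨hz, fun ho => absurd ho.1 (hzp.not_gt)⟩
          rw [← hdiff] at h0; exact ⟨h0.1, hzp⟩)
      hdiff le_rfl

lemma rtg_to_seq {α : Type*} [PartialOrder α] {c d : Set α} (hc : IsMaxChain (· ≤ ·) c)
    (h : Relation.ReflTransGen Move c d) :
    ∃ (n : ℕ) (f : ℕ → Set α), f 0 = c ∧ f n = d ∧
      (∀ i ≤ n, IsMaxChain (· ≤ ·) (f i)) ∧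
      ∀ i < n, (symmDiff (f i) (f (i + 1))).ncard = 2 := by
  induction h with
  | refl =>
    exact ⟨0, fun _ => c, rfl, rfl, fun i _ => hc, fun i hi => absurd hi (Nat.not_lt_zero i)⟩
  | @tail b e h1 h2 ih =>
    obtain ⟨n, f, hf0, hfn, hmax, hsd⟩ := ih
    refine ⟨n + 1, fun i => if i ≤ n then f i else e, ?_, ?_, ?_, ?_⟩
    · simp [hf0]
    · have hn : ¬ (n + 1 ≤ n) := by omega
      simp [hn]
    · intro i hi
      by_cases hle : i ≤ n
      · simpa [hle] using hmax i hle
      · simpa [hle] using h2.1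
    · intro i hi
      by_cases hlt : i < n
      · have h1' : i ≤ n := hlt.le
        have h2' : i + 1 ≤ n := hlt
        simpa [h1', h2'] using hsd i hlt
      · have hin : i = n := by omega
        subst hin
        have h1' : i ≤ i := le_rfl
        have h2' : ¬ (i + 1 ≤ i) := by omega
        simpa [h1', h2', hfn] using h2.2

end SCAux

theorem stronglyConnected_of_connected_open_intervals {α : Type*} [PartialOrder α]
    [BoundedOrder α]
    (hht : ∃ N : ℕ, ∀ c : Set α, IsChain (· ≤ ·) c → c.Finite ∧ c.ncard ≤ N)
    (hconn : ∀ x y : α, (∃ u ∈ Set.Ioo x y, ∃ v ∈ Set.Ioo x y, u < v) →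
      ∀ a ∈ Set.Ioo x y, ∀ b ∈ Set.Ioo x y,
        Relation.ReflTransGen
          (fun u v => u ∈ Set.Ioo x y ∧ v ∈ Set.Ioo x y ∧ (u ≤ v ∨ v ≤ u)) a b) :
    StronglyConnectedOrder α := by
  obtain ⟨N, hN⟩ := hht
  intro c d hc hd
  have hfin : ∀ e : Set α, IsChain (· ≤ ·) e → e.Finite := fun e he => (hN e he).1
  have hbotc : (⊥ : α) ∈ c := SCAux.mem_of_comp hc (fun w _ => Or.inl bot_le)
  have htopc : (⊤ : α) ∈ c := SCAux.mem_of_comp hc (fun w _ => Or.inr le_top)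
  have hbotd : (⊥ : α) ∈ d := SCAux.mem_of_comp hd (fun w _ => Or.inl bot_le)
  have htopd : (⊤ : α) ∈ d := SCAux.mem_of_comp hd (fun w _ => Or.inr le_top)
  have hcc : ∀ e : Set α, (⊥ : α) ∈ e → (⊤ : α) ∈ e →
      e \ Set.Ioo ⊥ ⊤ = ({⊥, ⊤} : Set α) := by
    intro e hbe hte
    ext z
    constructor
    · rintro ⟨hz, hzn⟩
      simp only [Set.mem_insert_iff, Set.mem_singleton_iff]
      by_contra hcon
      push_neg at hcon
      exact hzn ⟨bot_lt_iff_ne_bot.mpr hcon.1, lt_top_iff_ne_top.mpr hcon.2⟩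
    · rintro (rfl | rfl)
      · exact ⟨hbe, fun h => lt_irrefl _ h.1⟩
      · exact ⟨hte, fun h => lt_irrefl _ h.2⟩
  have hdiff : c \ Set.Ioo ⊥ ⊤ = d \ Set.Ioo ⊥ ⊤ := by
    rw [hcc c hbotc htopc, hcc d hbotd htopd]
  have hmain := SCAux.main hfin hconn N ⊥ ⊤ (fun e he _ => (hN e he).2) c d hc hd
    hbotc htopc hbotd htopd hdiff
  exact SCAux.rtg_to_seq hc hmain
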